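/- Let 𝖵 be a functorial L²-subspace of G-systems and let ... → X₂ → X₁ → X₀ be an inverse sequence of probability-preserving G-systems in which every connecting extension π_i: X_{i+1} → X_i is relatively 𝖵-sated. Then the inverse limit X_∞ is 𝖵-sated: for any extension ξ: Y → X_∞, the subspaces L²(μ_∞) ∘ ξ and 𝖵_Y are relatively orthogonal over 𝖵_{X_∞} ∘ ξ. -/

import Mathlib

open scoped InnerProductSpace

open MeasureTheory

/-- A probability-preserving `G`-system on a standard Borel probability space. -/
structure PPSystem (G : Type) [Group G] : Type 1 where
  /-- the underlying point space -/
  X : Type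
  /-- the σ-algebra -/
  mX : MeasurableSpace X
  /-- the space is standard Borel -/
  sb : @StandardBorelSpace X mX
  /-- the invariant probability measure -/
  μ : @Measure X mX
  prob : @IsProbabilityMeasure X mX μ
  /-- the action -/
  T : G → X → X
  hmp : ∀ g, @MeasurePreserving X X mX mX (T g) μ μ
  h1 : T 1 = id
  hmul : ∀ g h : G, T (g * h) = T g ∘ T h

instance {G : Type} [Group G] (S : PPSystem G) : MeasurableSpace S.X := S.mX
instance {G : Type} [Group G] (S : PPSystem G) : StandardBorelSpace S.X := S.sb
instance {G : Type} [Group G] (S : PPSystem G) : IsProbabilityMeasure S.μ := S.prob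

/-- `π` is a factor map (extension) from the `G`-system `Y` onto the `G`-system `X`:
it is measure-preserving and intertwines the actions almost everywhere. -/
def IsFactorMap {G : Type} [Group G] (Y X : PPSystem G) (π : Y.X → X.X) : Prop :=
  MeasurePreserving π Y.μ X.μ ∧ ∀ g : G, ∀ᵐ y ∂Y.μ, π (Y.T g y) = X.T g (π y)

/-- Pulling an `L²` function back along a measure-preserving map, as a linear map. -/
noncomputable def pullback {G : Type} [Group G] (Y X : PPSystem G) (π : Y.X → X.X)
    (hπ : MeasurePreserving π Y.μ X.μ) : Lp ℝ 2 X.μ →ₗ[ℝ] Lp ℝ 2 Y.μ :=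
  Lp.compMeasurePreservingₗ ℝ π hπ

/-- A functorial `L²`-subspace of `G`-systems: an assignment to each system `X` of a closed
subspace `𝖵_X ≤ L²(μ_X)`, such that `𝖵_X ∘ π ⊆ 𝖵_Y` for every factor map `π : Y → X`. -/
structure FunctorialSubspace (G : Type) [Group G] : Type 1 where
  /-- the subspace assigned to each system -/
  V : (X : PPSystem G) → Submodule ℝ (Lp ℝ 2 X.μ)
  closed : ∀ X : PPSystem G, IsClosed (V X : Set (Lp ℝ 2 X.μ))
  mono : ∀ (Y X : PPSystem G) (π : Y.X → X.X) (hπ : IsFactorMap Y X π)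
    (f : Lp ℝ 2 X.μ), f ∈ V X → pullback Y X π hπ.1 f ∈ V Y

/-- `K₁` and `K₂` are relatively orthogonal over `L`: `⟪u, v⟫ = ⟪P_L u, P_L v⟫` for all
`u ∈ K₁`, `v ∈ K₂`.  The orthogonal projection `P_L u` is characterized by `P_L u ∈ L`
together with `u - P_L u ⟂ L`, which is how it is phrased here. -/
def RelOrthOver {E : Type} [NormedAddCommGroup E] [InnerProductSpace ℝ E]
    (K₁ K₂ L : Submodule ℝ E) : Prop :=
  ∀ u ∈ K₁, ∀ v ∈ K₂, ∀ pu ∈ L, ∀ pv ∈ L,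
    (∀ w ∈ L, ⟪u - pu, w⟫_ℝ = 0) → (∀ w ∈ L, ⟪v - pv, w⟫_ℝ = 0) →
    ⟪u, v⟫_ℝ = ⟪pu, pv⟫_ℝ

/-- A system `X` is `𝖵`-sated if for every extension `ξ : Y → X`, the subspaces
`L²(μ_X) ∘ ξ` and `𝖵_Y` of `L²(μ_Y)` are relatively orthogonal over `𝖵_X ∘ ξ`. -/
def IsSated {G : Type} [Group G] (𝕍 : FunctorialSubspace G) (X : PPSystem G) : Prop :=
  ∀ (Y : PPSystem G) (ξ : Y.X → X.X) (hξ : IsFactorMap Y X ξ),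
    RelOrthOver (LinearMap.range (pullback Y X ξ hξ.1)) (𝕍.V Y)
      ((𝕍.V X).map (pullback Y X ξ hξ.1))

/-- An extension `π : X̃ → X` is relatively `𝖵`-sated if for every further extension
`ξ : Y → X̃`, the subspaces `L²(μ_X) ∘ (π ∘ ξ)` and `𝖵_Y` are relatively orthogonal
over `𝖵_{X̃} ∘ ξ`. -/
def IsRelSated {G : Type} [Group G] (𝕍 : FunctorialSubspace G) (Xt X : PPSystem G)
    (π : Xt.X → X.X) (hπ : MeasurePreserving π Xt.μ X.μ) : Prop :=
  ∀ (Y : PPSystem G) (ξ : Y.X → Xt.X) (hξ : IsFactorMap Y Xt ξ),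
    RelOrthOver (LinearMap.range (pullback Y X (π ∘ ξ) (hπ.comp hξ.1))) (𝕍.V Y)
      ((𝕍.V Xt).map (pullback Y Xt ξ hξ.1))

section Aux

variable {G : Type} [Group G]

lemma pullback_apply (Y X : PPSystem G) (π : Y.X → X.X) (hπ : MeasurePreserving π Y.μ X.μ)
    (f : Lp ℝ 2 X.μ) : pullback Y X π hπ f = Lp.compMeasurePreserving π hπ f := rfl

lemma ae_comp (Y X : PPSystem G) {φ : Y.X → X.X} (hφ : MeasurePreserving φ Y.μ X.μ)
    {p : X.X → Prop} (hp : ∀ᵐ x ∂X.μ, p x) : ∀ᵐ y ∂Y.μ, p (φ y) :=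
  ae_of_ae_map hφ.measurable.aemeasurable (by rw [hφ.map_eq]; exact hp)

lemma pullback_congr (Y X : PPSystem G) {φ₁ φ₂ : Y.X → X.X}
    (h₁ : MeasurePreserving φ₁ Y.μ X.μ) (h₂ : MeasurePreserving φ₂ Y.μ X.μ)
    (h : ∀ᵐ y ∂Y.μ, φ₁ y = φ₂ y) (f : Lp ℝ 2 X.μ) :
    pullback Y X φ₁ h₁ f = pullback Y X φ₂ h₂ f := by
  apply Lp.ext
  refine (Lp.coeFn_compMeasurePreserving f h₁).trans
    (.trans ?_ (Lp.coeFn_compMeasurePreserving f h₂).symm)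
  filter_upwards [h] with y hy
  simp only [Function.comp_apply, hy]

lemma pullback_comp (Y Z X : PPSystem G) (φ : Y.X → Z.X) (χ : Z.X → X.X)
    (hφ : MeasurePreserving φ Y.μ Z.μ) (hχ : MeasurePreserving χ Z.μ X.μ) (f : Lp ℝ 2 X.μ) :
    pullback Y X (χ ∘ φ) (hχ.comp hφ) f = pullback Y Z φ hφ (pullback Z X χ hχ f) := by
  apply Lp.ext
  have A := Lp.coeFn_compMeasurePreserving f (hχ.comp hφ)
  have B := Lp.coeFn_compMeasurePreserving (Lp.compMeasurePreserving χ hχ f) hφ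
  have C : ∀ᵐ y ∂Y.μ, (Lp.compMeasurePreserving χ hχ f : Z.X → ℝ) (φ y) = f (χ (φ y)) :=
    ae_comp Y Z hφ (Lp.coeFn_compMeasurePreserving f hχ)
  rw [pullback_apply, pullback_apply, pullback_apply]
  filter_upwards [A, B, C] with y hA hB hC
  rw [hA, hB]
  simp only [Function.comp_apply]
  exact hC.symm

lemma factor_comp {Y Z X : PPSystem G} {φ : Y.X → Z.X} {χ : Z.X → X.X}
    (hφ : IsFactorMap Y Z φ) (hχ : IsFactorMap Z X χ) : IsFactorMap Y X (χ ∘ φ) := by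
  refine ⟨hχ.1.comp hφ.1, fun g => ?_⟩
  filter_upwards [hφ.2 g, ae_comp Y Z hφ.1 (hχ.2 g)] with y h1 h2
  simp only [Function.comp_apply]
  rw [h1, h2]

lemma map_isComplete (Y X : PPSystem G) (φ : Y.X → X.X) (hφ : MeasurePreserving φ Y.μ X.μ)
    (V : Submodule ℝ (Lp ℝ 2 X.μ)) (hV : IsClosed (V : Set (Lp ℝ 2 X.μ))) :
    IsComplete ((V.map (pullback Y X φ hφ)) : Set (Lp ℝ 2 Y.μ)) := by
  have : ((V.map (pullback Y X φ hφ)) : Set (Lp ℝ 2 Y.μ)) =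
      (Lp.compMeasurePreserving φ hφ) '' (V : Set (Lp ℝ 2 X.μ)) := by
    rw [Submodule.map_coe]; rfl
  rw [this]
  exact (isComplete_image_iff
    (Lp.isometry_compMeasurePreserving hφ).isUniformInducing).2 hV.isComplete

end Aux

/-- If every connecting map of an inverse sequence of `G`-systems is relatively `𝖵`-sated,
then the inverse limit (a system with compatible factor maps `ψ_m` onto the `X_m`, such that
`⋃_m L²(μ_m) ∘ ψ_m` is dense in `L²(μ_∞)`) is `𝖵`-sated. -/
theorem invLimit_sated {G : Type} [Group G] [Countable G] (𝕍 : FunctorialSubspace G)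
    (Xs : ℕ → PPSystem G)
    (π : ∀ i : ℕ, (Xs (i + 1)).X → (Xs i).X)
    (hπ : ∀ i, IsFactorMap (Xs (i + 1)) (Xs i) (π i))
    (hrel : ∀ i, IsRelSated 𝕍 (Xs (i + 1)) (Xs i) (π i) (hπ i).1)
    (Xinf : PPSystem G) (ψ : ∀ m : ℕ, Xinf.X → (Xs m).X)
    (hψ : ∀ m, IsFactorMap Xinf (Xs m) (ψ m))
    (hcompat : ∀ m, ∀ᵐ x ∂Xinf.μ, ψ m x = π m (ψ (m + 1) x))
    (hdense : Dense (⋃ m : ℕ,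
      (LinearMap.range (pullback Xinf (Xs m) (ψ m) (hψ m).1) : Set (Lp ℝ 2 Xinf.μ)))) :
    IsSated 𝕍 Xinf := by
  intro Y ξ hξ u hu v hv pu hpu pv hpv hou hov
  set Pb := pullback Y Xinf ξ hξ.1 with hPb
  set L := (𝕍.V Xinf).map Pb with hL
  -- L ⊆ 𝕍.V Y
  have hLV : ∀ w ∈ L, w ∈ 𝕍.V Y := by
    rintro w ⟨f, hf, rfl⟩
    exact 𝕍.mono Y Xinf ξ hξ f hf
  set z := v - pv with hz
  have hzV : z ∈ 𝕍.V Y := Submodule.sub_mem _ hv (hLV pv hpv)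
  -- key claim: ⟪Pb f, z⟫ = 0 for all f
  have key : ∀ f : Lp ℝ 2 Xinf.μ, ⟪Pb f, z⟫_ℝ = 0 := by
    have hScl : IsClosed {f : Lp ℝ 2 Xinf.μ | ⟪Pb f, z⟫_ℝ = 0} := by
      apply isClosed_eq _ continuous_const
      exact Continuous.inner
        ((Lp.isometry_compMeasurePreserving hξ.1).continuous) continuous_const
    have hSsub : (⋃ m : ℕ,
        (LinearMap.range (pullback Xinf (Xs m) (ψ m) (hψ m).1) : Set (Lp ℝ 2 Xinf.μ))) ⊆
        {f : Lp ℝ 2 Xinf.μ | ⟪Pb f, z⟫_ℝ = 0} := by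
      rintro f hf
      simp only [Set.mem_iUnion, SetLike.mem_coe, LinearMap.mem_range] at hf
      obtain ⟨m, g, rfl⟩ := hf
      -- the composed factor map ξ' = ψ (m+1) ∘ ξ
      have hξ' : IsFactorMap Y (Xs (m + 1)) (ψ (m + 1) ∘ ξ) := factor_comp hξ (hψ (m + 1))
      set Lm := (𝕍.V (Xs (m + 1))).map (pullback Y (Xs (m + 1)) (ψ (m + 1) ∘ ξ) hξ'.1) with hLm
      have hLmL : ∀ w ∈ Lm, w ∈ L := by
        rintro w ⟨h, hh, rfl⟩
        refine ⟨pullback Xinf (Xs (m + 1)) (ψ (m + 1)) (hψ (m + 1)).1 h,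
          𝕍.mono Xinf (Xs (m + 1)) (ψ (m + 1)) (hψ (m + 1)) h hh, ?_⟩
        exact (pullback_comp Y Xinf (Xs (m + 1)) ξ (ψ (m + 1)) hξ.1 (hψ (m + 1)).1 h).symm
      -- completeness of Lm so that projections exist
      haveI : CompleteSpace ↥Lm :=
        (map_isComplete Y (Xs (m + 1)) (ψ (m + 1) ∘ ξ) hξ'.1 (𝕍.V (Xs (m + 1)))
          (𝕍.closed _)).completeSpace_coe
      set u' := Pb (pullback Xinf (Xs m) (ψ m) (hψ m).1 g) with hu'
      -- u' is in the range of the pullback along π m ∘ (ψ (m+1) ∘ ξ)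
      have hcompY : ∀ᵐ y ∂Y.μ, (ψ m ∘ ξ) y = (π m ∘ (ψ (m + 1) ∘ ξ)) y := by
        have := ae_comp Y Xinf hξ.1 (hcompat m)
        filter_upwards [this] with y hy
        exact hy
      have hu'eq : u' = pullback Y (Xs m) (π m ∘ (ψ (m + 1) ∘ ξ))
          (((hπ m).1).comp hξ'.1) g := by
        rw [hu', ← pullback_comp Y Xinf (Xs m) ξ (ψ m) hξ.1 (hψ m).1 g]
        exact pullback_congr Y (Xs m) ((hψ m).1.comp hξ.1) (((hπ m).1).comp hξ'.1) hcompY g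
      set q := (Lm.orthogonalProjectionOnto u' : Lp ℝ 2 Y.μ) with hq
      have hrelm := hrel m Y (ψ (m + 1) ∘ ξ) hξ'
      have := hrelm u' ⟨g, hu'eq.symm⟩ z hzV q (Lm.orthogonalProjectionOnto u').2 0
        (Submodule.zero_mem _)
        (fun w hw => Lm.starProjection_inner_eq_zero u' w hw)
        (fun w hw => by rw [sub_zero]; exact hov w (hLmL w hw))
      simpa using this
    have := hScl.closure_subset_iff.2 hSsub
    rw [hdense.closure_eq] at this
    intro f
    exact this (Set.mem_univ f)
  -- finish
  obtain ⟨f, rfl⟩ := hu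
  have h1 : ⟪Pb f, v⟫_ℝ = ⟪Pb f, pv⟫_ℝ := by
    have := key f
    rw [hz, inner_sub_right] at this
    linarith
  have h2 : ⟪Pb f, pv⟫_ℝ = ⟪pu, pv⟫_ℝ := by
    have := hou pv hpv
    rw [inner_sub_left] at this
    linarith
  rw [h1, h2]
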